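/- Let μ, μ' ∈ P_r and w, w' ∈ S_r. If rμ − δ + w•δ ∈ rQ_r and rμ' − δ + w'•δ ∈ rQ_r, then r(μ + w•μ') − δ + (w∘w')•δ ∈ rQ_r. -/

import Mathlib

open Finset

noncomputable section

/-- Inner product `⟨u,v⟩ = Σ_i u i * v i` on `ℚ^r`. -/
def ip {r : ℕ} (u v : Fin r → ℚ) : ℚ := ∑ i, u i * v i

/-- Action of `S_r` permuting coordinates: `(w • v) i = v (w⁻¹ i)`. -/
def pact {r : ℕ} (w : Equiv.Perm (Fin r)) (v : Fin r → ℚ) : Fin r → ℚ := fun i => v (w⁻¹ i)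

/-- The Weyl vector `δ`, whose (1-indexed) `i`-th coordinate is `(r+1-2i)/2`. -/
def weylδ (r : ℕ) : Fin r → ℚ := fun j => ((r : ℚ) - 1 - 2 * ((j : ℕ) : ℚ)) / 2

/-- Membership in `V = {v : Fin r → ℚ | Σ_i v i = 0}`. -/
def memV {r : ℕ} (v : Fin r → ℚ) : Prop := ∑ i, v i = 0

/-- Membership in the root lattice `Q_r`. -/
def memQ {r : ℕ} (v : Fin r → ℚ) : Prop := memV v ∧ ∀ i, ∃ m : ℤ, v i = (m : ℚ)

/-- Membership in the weight lattice `P_r`. -/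
def memP {r : ℕ} (v : Fin r → ℚ) : Prop := memV v ∧ ∀ i j, ∃ m : ℤ, v i - v j = (m : ℚ)

/-- The first fundamental weight `Λ₁ = ε₁ - (1/r)(ε₁ + ⋯ + ε_r)`. -/
def Lam1 (r : ℕ) : Fin r → ℚ := fun j => (if (j : ℕ) = 0 then 1 else 0) - 1 / (r : ℚ)

/-- The simple roots, 0-indexed: `srootF i = ε_{i+1} - ε_{i+2}` in 1-indexed notation. -/
def srootF {r : ℕ} (i : Fin (r - 1)) : Fin r → ℚ :=
  fun j => (if (j : ℕ) = (i : ℕ) then 1 else 0) - (if (j : ℕ) = (i : ℕ) + 1 then 1 else 0)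

/-- The highest root `θ = ε₁ - ε_r`. -/
def hroot (r : ℕ) : Fin r → ℚ :=
  fun j => (if (j : ℕ) = 0 then 1 else 0) - (if (j : ℕ) = r - 1 then 1 else 0)

/-- The set `Π_{r,n}` of weights of `L_r(nΛ₁)`:
all `nΛ₁ - a₁α₁ - ⋯ - a_{r-1}α_{r-1}` with `n ≥ a₁ ≥ ⋯ ≥ a_{r-1} ≥ 0`. -/
def PiWts (r n : ℕ) : Set (Fin r → ℚ) :=
  {v | ∃ a : Fin (r - 1) → ℤ, (∀ i, 0 ≤ a i) ∧ (∀ i, a i ≤ (n : ℤ)) ∧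
        (∀ i j, i ≤ j → a j ≤ a i) ∧
        v = (n : ℚ) • Lam1 r - ∑ i, (a i : ℚ) • srootF i}

/-- if `rμ - δ + w•δ ∈ rQ_r` and `rμ' - δ + w'•δ ∈ rQ_r`, then
`r(μ + w•μ') - δ + (w∘w')•δ ∈ rQ_r`. -/
theorem stmt7 (r : ℕ) (hr : 2 ≤ r) (μ μ' : Fin r → ℚ) (hμ : memP μ) (hμ' : memP μ')
    (w w' : Equiv.Perm (Fin r))
    (h1 : ∃ lam, memQ lam ∧ (r : ℚ) • μ - weylδ r + pact w (weylδ r) = (r : ℚ) • lam)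
    (h2 : ∃ lam, memQ lam ∧ (r : ℚ) • μ' - weylδ r + pact w' (weylδ r) = (r : ℚ) • lam) :
    ∃ lam, memQ lam ∧
      (r : ℚ) • (μ + pact w μ') - weylδ r + pact (w * w') (weylδ r) = (r : ℚ) • lam := by
  obtain ⟨l1, ⟨hs1, hi1⟩, he1⟩ := h1
  obtain ⟨l2, ⟨hs2, hi2⟩, he2⟩ := h2
  refine ⟨l1 + pact w l2, ⟨?_, ?_⟩, ?_⟩
  · unfold memV pact at *
    simp only [Pi.add_apply]
    rw [Finset.sum_add_distrib, hs1, Fintype.sum_equiv w⁻¹ _ l2 (fun i => rfl), hs2]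
    ring
  · intro i
    obtain ⟨m1, hm1⟩ := hi1 i
    obtain ⟨m2, hm2⟩ := hi2 (w⁻¹ i)
    exact ⟨m1 + m2, by show l1 i + l2 (w⁻¹ i) = _; rw [hm1, hm2, Int.cast_add]⟩
  · funext i
    have e1 := congrFun he1 i
    have e2 := congrFun he2 (w⁻¹ i)
    simp only [Pi.add_apply, Pi.sub_apply, Pi.smul_apply, smul_eq_mul, pact] at *
    have : (w * w')⁻¹ i = w'⁻¹ (w⁻¹ i) := by
      simp [mul_inv_rev, Equiv.Perm.mul_apply]
    rw [this]
    linarith
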